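/- Let u : ℝⁿ \ {x₀} → ℝ be given by u(x) = c₀/|x − x₀|^(n−2) with c₀ > 0 and n ≥ 3, and suppose also u(x) = c₀'/|x − x₀'|^(n−2) for all x in a nonempty open subset U of ℝⁿ \ ({x₀} ∪ {x₀'}), with c₀' > 0. Then x₀ = x₀' and c₀ = c₀'. -/

import Mathlib

theorem stmt_5 (n : ℕ) (hn : 3 ≤ n) (c₀ c₀' : ℝ) (hc₀ : 0 < c₀) (hc₀' : 0 < c₀')
    (x₀ x₀' : EuclideanSpace ℝ (Fin n)) (U : Set (EuclideanSpace ℝ (Fin n)))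
    (hU : IsOpen U) (hne : U.Nonempty) (hx₀ : x₀ ∉ U) (hx₀' : x₀' ∉ U)
    (heq : ∀ x ∈ U, c₀ / ‖x - x₀‖ ^ (n - 2) = c₀' / ‖x - x₀'‖ ^ (n - 2)) :
    x₀ = x₀' ∧ c₀ = c₀' := by
  set m := n - 2 with hm
  have hm0 : 0 < m := by omega
  have hmR : (m : ℝ) ≠ 0 := by positivity
  obtain ⟨p, hp⟩ := hne
  obtain ⟨ε, hε, hball⟩ := Metric.isOpen_iff.mp hU p hp
  set A := c₀ ^ ((2:ℝ)/m) with hAdef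
  set B := c₀' ^ ((2:ℝ)/m) with hBdef
  have hA : 0 < A := Real.rpow_pos_of_pos hc₀ _
  have hB : 0 < B := Real.rpow_pos_of_pos hc₀' _
  have key : ∀ x ∈ U, A * ‖x - x₀'‖^2 = B * ‖x - x₀‖^2 := by
    intro x hx
    have h1 : x ≠ x₀ := fun h => hx₀ (h ▸ hx)
    have h2 : x ≠ x₀' := fun h => hx₀' (h ▸ hx)
    have d1 : (0:ℝ) < ‖x - x₀‖ := norm_pos_iff.mpr (sub_ne_zero.mpr h1)
    have d2 : (0:ℝ) < ‖x - x₀'‖ := norm_pos_iff.mpr (sub_ne_zero.mpr h2)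
    have h := heq x hx
    have hcross : c₀ * ‖x - x₀'‖ ^ m = c₀' * ‖x - x₀‖ ^ m := by
      field_simp at h
      linarith
    have hr := congrArg (fun y : ℝ => y ^ ((2:ℝ)/m)) hcross
    rw [Real.mul_rpow hc₀.le (by positivity), Real.mul_rpow hc₀'.le (by positivity)] at hr
    rw [← Real.rpow_natCast ‖x - x₀'‖ m, ← Real.rpow_natCast ‖x - x₀‖ m,
      ← Real.rpow_mul d2.le, ← Real.rpow_mul d1.le] at hr
    have hme : (m : ℝ) * ((2:ℝ)/m) = 2 := by field_simp
    rw [hme] at hr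
    rw [Real.rpow_two] at hr
    simpa [sq] using hr
  have quad : ∀ (v : EuclideanSpace ℝ (Fin n)) (t : ℝ), p + t • v ∈ U →
      (A - B) * ‖v‖^2 * t^2 +
        2 * t * (A * (inner ℝ (p - x₀') v : ℝ) - B * (inner ℝ (p - x₀) v : ℝ)) +
        (A * ‖p - x₀'‖^2 - B * ‖p - x₀‖^2) = 0 := by
    intro v t ht
    have h := key _ ht
    have e : ∀ y : EuclideanSpace ℝ (Fin n),
        ‖p + t • v - y‖^2 = ‖p - y‖^2 + 2 * t * (inner ℝ (p - y) v : ℝ) + t^2 * ‖v‖^2 := by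
      intro y
      have hrw : p + t • v - y = (p - y) + t • v := by abel
      rw [hrw, norm_add_sq_real, real_inner_smul_right, norm_smul]
      simp [mul_pow, sq_abs]
      ring
    rw [e x₀', e x₀] at h
    ring_nf at h ⊢
    linarith
  have const0 : A * ‖p - x₀'‖^2 - B * ‖p - x₀‖^2 = 0 := by
    have h := quad 0 0 (by simpa using hp)
    simpa using h
  have coeffs : ∀ v : EuclideanSpace ℝ (Fin n),
      (A - B) * ‖v‖^2 = 0 ∧
      A * (inner ℝ (p - x₀') v : ℝ) - B * (inner ℝ (p - x₀) v : ℝ) = 0 := by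
    intro v
    set s : ℝ := ε / (2 * (‖v‖ + 1)) with hs
    have hs0 : 0 < s := by positivity
    have hmem : ∀ t : ℝ, |t| ≤ s → p + t • v ∈ U := by
      intro t htle
      apply hball
      simp only [Metric.mem_ball, dist_eq_norm]
      have : p + t • v - p = t • v := by abel
      rw [this, norm_smul]
      have h1 : ‖v‖ < ‖v‖ + 1 := by linarith
      have h2 : |t| * ‖v‖ ≤ s * (‖v‖ + 1) := by
        apply mul_le_mul htle (by linarith) (norm_nonneg v) hs0.le
      have h3 : s * (‖v‖ + 1) = ε / 2 := by
        rw [hs]; field_simp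
      simp only [Real.norm_eq_abs]
      linarith
    have hq1 := quad v s (hmem s (by rw [abs_of_pos hs0]))
    have hq2 := quad v (-s) (hmem (-s) (by rw [abs_neg, abs_of_pos hs0]))
    rw [const0] at hq1 hq2
    have hsq : s ^ 2 ≠ 0 := by positivity
    constructor
    · have : (A - B) * ‖v‖^2 * s^2 = 0 := by nlinarith
      exact (mul_eq_zero.mp this).resolve_right hsq
    · nlinarith [hs0]
  haveI : Nonempty (Fin n) := ⟨⟨0, by omega⟩⟩
  have hAB : A = B := by
    obtain ⟨v, hv⟩ := exists_ne (0 : EuclideanSpace ℝ (Fin n))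
    have := (coeffs v).1
    have hv2 : ‖v‖^2 ≠ 0 := by
      have := norm_pos_iff.mpr hv
      positivity
    have := (mul_eq_zero.mp this).resolve_right hv2
    linarith
  have hx : x₀ = x₀' := by
    have hzero : ∀ v : EuclideanSpace ℝ (Fin n), (inner ℝ (A • (p - x₀') - B • (p - x₀)) v : ℝ) = 0 := by
      intro v
      rw [inner_sub_left, real_inner_smul_left, real_inner_smul_left]
      exact (coeffs v).2
    have := hzero (A • (p - x₀') - B • (p - x₀))
    rw [inner_self_eq_zero] at this
    rw [sub_eq_zero, hAB] at this
    have := smul_right_injective (EuclideanSpace ℝ (Fin n)) (ne_of_gt hB) this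
    exact (sub_right_injective this).symm
  refine ⟨hx, ?_⟩
  have h := heq p hp
  rw [hx] at h
  have h1 : p ≠ x₀' := fun hh => hx₀' (hh ▸ hp)
  have d1 : (0:ℝ) < ‖p - x₀'‖ := norm_pos_iff.mpr (sub_ne_zero.mpr h1)
  have dm : (0:ℝ) < ‖p - x₀'‖ ^ m := by positivity
  field_simp at h
  linarith [h]
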